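/- Let A₁, …, A_k be 2×2 matrices over a ℂ-algebra A, each triangular of the form (aᵢ, bᵢ; 0, aᵢ⁻¹) or (aᵢ, 0; bᵢ, aᵢ⁻¹) with bᵢaᵢ = q aᵢbᵢ (q ∈ ℂ arbitrary nonzero) and with aᵢ, bᵢ commuting with aⱼ, bⱼ for i ≠ j. Then for every n ≥ 0, T_n(Trace A₁A₂⋯A_k) can be written as a finite sum of monomials of the form q^ξ ∏_{i=1}^{k} aᵢ^{αᵢ} bᵢ^{βᵢ} with ξ, αᵢ ∈ ℤ, βᵢ ∈ ℕ, each appearing with coefficient +1 (i.e., with no negative signs). -/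

import Mathlib

set_option linter.unusedSectionVars false

/-- The normalized Chebyshev polynomial of the first kind, evaluated in a ring:
`T_{n+1}(t) = t·T_n(t) − T_{n−1}(t)`, `T_1(t) = t`, `T_0(t) = 2`. -/
def chebT {A : Type*} [Ring A] : ℕ → A → A
  | 0, _ => 2
  | 1, t => t
  | n + 2, t => t * chebT (n + 1) t - chebT n t

/-- The triangular matrix `(a, b; 0, a⁻¹)` (if `upper`) or `(a, 0; b, a⁻¹)` (if not). -/
def triMat {A : Type*} [Ring A] (upper : Bool) (a : Aˣ) (b : A) :
    Matrix (Fin 2) (Fin 2) A :=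
  if upper then !![(a : A), b; 0, ((a⁻¹ : Aˣ) : A)]
  else !![(a : A), 0; b, ((a⁻¹ : Aˣ) : A)]

/-- The monomial `∏ᵢ aᵢ^{αᵢ} ∏ᵢ bᵢ^{βᵢ}` associated to exponents
`m = (α, β) : (Fin k → ℤ) × (Fin k → ℕ)`. -/
def qMonomial {A : Type*} [Ring A] {k : ℕ} (a : Fin k → Aˣ) (b : Fin k → A)
    (m : (Fin k → ℤ) × (Fin k → ℕ)) : A :=
  (List.ofFn fun i => ((a i ^ m.1 i : Aˣ) : A)).prod *
    (List.ofFn fun i => b i ^ m.2 i).prod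

lemma ofFn_prod_single {M : Type*} [Monoid M] : ∀ {k : ℕ} (f : Fin k → M) (i : Fin k),
    (∀ j, j ≠ i → f j = 1) → (List.ofFn f).prod = f i := by
  intro k
  induction k with
  | zero => intro f i _; exact i.elim0
  | succ k ih =>
    intro f i h
    rw [List.ofFn_succ, List.prod_cons]
    rcases Fin.eq_zero_or_eq_succ i with rfl | ⟨i', rfl⟩
    · have h1 : (List.ofFn fun j : Fin k => f j.succ).prod = 1 :=
        List.prod_eq_one fun x hx => by
          obtain ⟨j, rfl⟩ := List.mem_ofFn.1 hx
          exact h j.succ (Fin.succ_ne_zero j)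
      rw [h1, mul_one]
    · rw [h 0 (Fin.succ_ne_zero i').symm, one_mul]
      exact ih _ i' fun j hj => h j.succ (by simpa [Fin.succ_inj] using hj)

/-- Chebyshev-like second kind sequence: `U 0 = 1`, `U 1 = t`, `U (n+2) = t U(n+1) − U n`. -/
def chebU {A : Type*} [Ring A] : ℕ → A → A
  | 0, _ => 1
  | 1, t => t
  | n + 2, t => t * chebU (n + 1) t - chebU n t

section Core
variable {A : Type*} [Ring A] [Algebra ℂ A]

lemma chebU_comm (t : A) : ∀ n, Commute t (chebU n t) := by
  have key : ∀ n, Commute t (chebU n t) ∧ Commute t (chebU (n+1) t) := by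
    intro n
    induction n with
    | zero => exact ⟨Commute.one_right t, Commute.refl t⟩
    | succ n ih =>
      refine ⟨ih.2, ?_⟩
      show Commute t (t * chebU (n+1) t - chebU n t)
      exact ((Commute.refl t).mul_right ih.2).sub_right ih.1
  exact fun n => (key n).1

lemma chebT_eq_chebU (t : A) : ∀ n, chebT (n+1) t = chebU (n+1) t + chebU (n+1) t - chebU n t * t := by
  have key : ∀ n, chebT (n+1) t = chebU (n+1) t + chebU (n+1) t - chebU n t * t ∧
      chebT (n+2) t = chebU (n+2) t + chebU (n+2) t - chebU (n+1) t * t := by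
    intro n
    induction n with
    | zero =>
      constructor
      · show t = t + t - 1 * t; noncomm_ring
      · show t * t - 2 = (t*t - 1) + (t*t - 1) - t * t
        noncomm_ring
        simp
    | succ n ih =>
      refine ⟨ih.2, ?_⟩
      show t * chebT (n+2) t - chebT (n+1) t = _
      rw [ih.1, ih.2]
      show t * (chebU (n+2) t + chebU (n+2) t - chebU (n+1) t * t)
          - (chebU (n+1) t + chebU (n+1) t - chebU n t * t)
        = (t * chebU (n+2) t - chebU (n+1) t) + (t * chebU (n+2) t - chebU (n+1) t)
          - (t * chebU (n+1) t - chebU n t) * t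
      noncomm_ring
  exact fun n => (key n).1

/-- Core positivity lemma. -/
lemma chebT_mem (P : Set A) (Q R : ℂ)
    (h1 : (1:A) ∈ P)
    (hadd : ∀ u v : A, u ∈ P → v ∈ P → u + v ∈ P)
    (hmul : ∀ u v : A, u ∈ P → v ∈ P → u * v ∈ P)
    (hQ : ∀ u : A, u ∈ P → Q • u ∈ P)
    (hR : ∀ u : A, u ∈ P → R • u ∈ P)
    (x y z w : A) (hx : x ∈ P) (hy : y ∈ P) (hz : z ∈ P) (hw : w ∈ P)
    (h6 : x * w = 1 + Q • (y * z)) (h7 : w * x = 1 + R • (y * z)) :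
    ∀ n, chebT n (x + w) ∈ P := by
  set t := x + w with ht
  have hyz : y * z ∈ P := hmul _ _ hy hz
  -- simultaneous induction
  have key : ∀ n, chebU n t ∈ P ∧ (chebU (n+1) t - chebU n t * x) ∈ P ∧
      (chebU (n+1) t - chebU n t * w) ∈ P := by
    intro n
    induction n with
    | zero =>
      refine ⟨h1, ?_, ?_⟩
      · have : chebU 1 t - chebU 0 t * x = w := by show t - 1 * x = w; rw [ht]; noncomm_ring
        rw [this]; exact hw
      · have : chebU 1 t - chebU 0 t * w = x := by show t - 1 * w = x; rw [ht]; noncomm_ring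
        rw [this]; exact hx
    | succ n ih =>
      obtain ⟨hg, hRn, hSn⟩ := ih
      have hgs : chebU (n+1) t ∈ P := by
        have : chebU (n+1) t = chebU n t * x + (chebU (n+1) t - chebU n t * x) := by noncomm_ring
        rw [this]; exact hadd _ _ (hmul _ _ hg hx) hRn
      refine ⟨hgs, ?_, ?_⟩
      · have keyR : chebU (n+2) t - chebU (n+1) t * x
            = (chebU (n+1) t - chebU n t * x) * w + Q • (chebU n t * (y * z)) := by
          have hc : t * chebU (n+1) t = chebU (n+1) t * t := (chebU_comm t (n+1)).eq
          show t * chebU (n+1) t - chebU n t - chebU (n+1) t * x = _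
          rw [hc, ht]
          noncomm_ring
          rw [h6]
          simp only [mul_add, mul_one, mul_smul_comm]
          abel
        rw [keyR]
        exact hadd _ _ (hmul _ _ hRn hw) (hQ _ (hmul _ _ hg hyz))
      · have keyS : chebU (n+2) t - chebU (n+1) t * w
            = (chebU (n+1) t - chebU n t * w) * x + R • (chebU n t * (y * z)) := by
          have hc : t * chebU (n+1) t = chebU (n+1) t * t := (chebU_comm t (n+1)).eq
          show t * chebU (n+1) t - chebU n t - chebU (n+1) t * w = _
          rw [hc, ht]
          noncomm_ring
          rw [h7]
          simp only [mul_add, mul_one, mul_smul_comm]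
          abel
        rw [keyS]
        exact hadd _ _ (hmul _ _ hSn hx) (hR _ (hmul _ _ hg hyz))
  intro n
  match n with
  | 0 =>
    show (2:A) ∈ P
    have : (2:A) = 1 + 1 := by norm_num
    rw [this]; exact hadd _ _ h1 h1
  | (n+1) =>
    rw [chebT_eq_chebU]
    have : chebU (n+1) t + chebU (n+1) t - chebU n t * t
        = (chebU (n+1) t - chebU n t * x) + (chebU (n+1) t - chebU n t * w) := by
      rw [ht]; noncomm_ring
    rw [this]
    exact hadd _ _ (key n).2.1 (key n).2.2
end Core


section QRel
variable {A : Type*} [Ring A] [Algebra ℂ A]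

/-- Quantum 2×2 matrix relations with parameter `q⁻¹`, and quantum determinant 1. -/
structure QRel (q : ℂ) (x y z w : A) : Prop where
  r1 : x * y = q⁻¹ • (y * x)
  r2 : x * z = q⁻¹ • (z * x)
  r3 : y * w = q⁻¹ • (w * y)
  r4 : z * w = q⁻¹ • (w * z)
  r5 : z * y = y * z
  r6 : x * w = 1 + q⁻¹ • (y * z)
  r7 : w * x = 1 + q • (y * z)

lemma qswap_tail {q : ℂ} {u v : A} (h : u * v = q • (v * u)) (t : A) :
    u * (v * t) = q • (v * (u * t)) := by
  rw [← mul_assoc, h, smul_mul_assoc, mul_assoc]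

lemma comm_tail {u v : A} (h : Commute u v) (t : A) : v * (u * t) = u * (v * t) := by
  rw [← mul_assoc, ← h.eq, mul_assoc]

lemma qdet_tail {c : ℂ} {x y z w : A} (h : x * w = 1 + c • (y * z)) (t : A) :
    x * (w * t) = t + c • (y * (z * t)) := by
  rw [← mul_assoc, h, add_mul, one_mul, smul_mul_assoc, mul_assoc]

lemma upper_mul {q : ℂ} (hq : q ≠ 0) {a : Aˣ} {b x y z w : A}
    (hba : b * ↑a = q • (↑a * b))
    (cax : Commute (↑a) x) (cay : Commute (↑a) y) (caz : Commute (↑a) z) (caw : Commute (↑a) w)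
    (cbx : Commute b x) (cby : Commute b y) (cbz : Commute b z) (cbw : Commute b w)
    (h : QRel q x y z w) :
    QRel q (↑a * x + b * z) (↑a * y + b * w) (↑a⁻¹ * z) (↑a⁻¹ * w) := by
  have hbai : b * ↑a⁻¹ = q⁻¹ • (↑a⁻¹ * b) := by
    have h1 := congrArg (fun t => (↑a⁻¹ : A) * t * ↑a⁻¹) hba
    simp only [mul_assoc, Units.mul_inv, Units.inv_mul_cancel_left, mul_one, mul_smul_comm,
      smul_mul_assoc] at h1
    rw [h1, smul_smul, inv_mul_cancel₀ hq, one_smul]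
  have caix : Commute (↑a⁻¹) x := cax.units_inv_left
  have caiy : Commute (↑a⁻¹) y := cay.units_inv_left
  have caiz : Commute (↑a⁻¹) z := caz.units_inv_left
  have caiw : Commute (↑a⁻¹) w := caw.units_inv_left
  constructor <;>
  · simp only [mul_add, add_mul, mul_assoc, smul_mul_assoc, mul_smul_comm, smul_smul, smul_add,
      -- cancel a with a⁻¹
      Units.mul_inv_cancel_left, Units.inv_mul_cancel_left,
      -- move a, a⁻¹ to the front, b next
      qswap_tail hba, qswap_tail hbai, hba, hbai,
      comm_tail cax, comm_tail cay, comm_tail caz, comm_tail caw,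
      comm_tail caix, comm_tail caiy, comm_tail caiz, comm_tail caiw,
      comm_tail cbx, comm_tail cby, comm_tail cbz, comm_tail cbw,
      cax.symm.eq, cay.symm.eq, caz.symm.eq, caw.symm.eq,
      caix.symm.eq, caiy.symm.eq, caiz.symm.eq, caiw.symm.eq,
      cbx.symm.eq, cby.symm.eq, cbz.symm.eq, cbw.symm.eq,
      -- order the entries w < y < z < x, eliminate x*w, w*x
      qswap_tail h.r1, qswap_tail h.r2, qswap_tail h.r3, qswap_tail h.r4,
      h.r1, h.r2, h.r3, h.r4, comm_tail (show Commute y z from h.r5.symm), h.r5,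
      qdet_tail h.r6, qdet_tail h.r7, h.r6, h.r7]
    try (match_scalars <;> field_simp)

lemma lower_mul {q : ℂ} (hq : q ≠ 0) {a : Aˣ} {b x y z w : A}
    (hba : b * ↑a = q • (↑a * b))
    (cax : Commute (↑a) x) (cay : Commute (↑a) y) (caz : Commute (↑a) z) (caw : Commute (↑a) w)
    (cbx : Commute b x) (cby : Commute b y) (cbz : Commute b z) (cbw : Commute b w)
    (h : QRel q x y z w) :
    QRel q (↑a * x) (↑a * y) (b * x + ↑a⁻¹ * z) (b * y + ↑a⁻¹ * w) := by
  have hbai : b * ↑a⁻¹ = q⁻¹ • (↑a⁻¹ * b) := by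
    have h1 := congrArg (fun t => (↑a⁻¹ : A) * t * ↑a⁻¹) hba
    simp only [mul_assoc, Units.mul_inv, Units.inv_mul_cancel_left, mul_one, mul_smul_comm,
      smul_mul_assoc] at h1
    rw [h1, smul_smul, inv_mul_cancel₀ hq, one_smul]
  have caix : Commute (↑a⁻¹) x := cax.units_inv_left
  have caiy : Commute (↑a⁻¹) y := cay.units_inv_left
  have caiz : Commute (↑a⁻¹) z := caz.units_inv_left
  have caiw : Commute (↑a⁻¹) w := caw.units_inv_left
  constructor <;>
  · simp only [mul_add, add_mul, mul_assoc, smul_mul_assoc, mul_smul_comm, smul_smul, smul_add,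
      -- cancel a with a⁻¹
      Units.mul_inv_cancel_left, Units.inv_mul_cancel_left,
      -- move a, a⁻¹ to the front, b next
      qswap_tail hba, qswap_tail hbai, hba, hbai,
      comm_tail cax, comm_tail cay, comm_tail caz, comm_tail caw,
      comm_tail caix, comm_tail caiy, comm_tail caiz, comm_tail caiw,
      comm_tail cbx, comm_tail cby, comm_tail cbz, comm_tail cbw,
      cax.symm.eq, cay.symm.eq, caz.symm.eq, caw.symm.eq,
      caix.symm.eq, caiy.symm.eq, caiz.symm.eq, caiw.symm.eq,
      cbx.symm.eq, cby.symm.eq, cbz.symm.eq, cbw.symm.eq,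
      -- order the entries w < y < z < x, eliminate x*w, w*x
      qswap_tail h.r1, qswap_tail h.r2, qswap_tail h.r3, qswap_tail h.r4,
      h.r1, h.r2, h.r3, h.r4, comm_tail (show Commute y z from h.r5.symm), h.r5,
      qdet_tail h.r6, qdet_tail h.r7, h.r6, h.r7]
    try (match_scalars <;> field_simp)

end QRel

section Mono
variable {A : Type*} [Ring A] [Algebra ℂ A] {q : ℂ}

lemma binv_swap (hq : q ≠ 0) {a : Aˣ} {b : A} (hba : b * ↑a = q • (↑a * b)) :
    b * ↑a⁻¹ = q⁻¹ • (↑a⁻¹ * b) := by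
  have h1 := congrArg (fun t => (↑a⁻¹ : A) * t * ↑a⁻¹) hba
  simp only [mul_assoc, Units.mul_inv, Units.inv_mul_cancel_left, mul_one, mul_smul_comm,
    smul_mul_assoc] at h1
  rw [h1, smul_smul, inv_mul_cancel₀ hq, one_smul]

lemma b_pow_swap {a : Aˣ} {b : A} (hba : b * ↑a = q • (↑a * b)) :
    ∀ p : ℕ, b * ↑(a ^ p) = q ^ p • (↑(a ^ p) * b) := by
  intro p
  induction p with
  | zero => simp
  | succ p ih =>
    have : (a ^ (p+1) : Aˣ) = a ^ p * a := by rw [pow_succ]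
    rw [this, Units.val_mul, ← mul_assoc, ih, smul_mul_assoc, mul_assoc, hba, mul_smul_comm,
      smul_smul, ← pow_succ, mul_assoc]

lemma b_zpow_swap (hq : q ≠ 0) {a : Aˣ} {b : A} (hba : b * ↑a = q • (↑a * b)) :
    ∀ α : ℤ, b * ↑(a ^ α) = q ^ α • (↑(a ^ α) * b) := by
  intro α
  cases α with
  | ofNat p => rw [Int.ofNat_eq_coe, zpow_natCast, zpow_natCast]; exact b_pow_swap hba p
  | negSucc p =>
    rw [zpow_negSucc, zpow_negSucc, ← inv_pow, ← inv_pow]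
    exact b_pow_swap (binv_swap hq hba) (p+1)

lemma bpow_zpow_swap (hq : q ≠ 0) {a : Aˣ} {b : A} (hba : b * ↑a = q • (↑a * b)) :
    ∀ (p : ℕ) (α : ℤ), b ^ p * ↑(a ^ α) = q ^ ((p : ℤ) * α) • (↑(a ^ α) * b ^ p) := by
  intro p α
  induction p with
  | zero => simp
  | succ p ih =>
    rw [pow_succ, mul_assoc, b_zpow_swap hq hba, mul_smul_comm, ← mul_assoc, ih, smul_mul_assoc,
      smul_smul, mul_assoc, ← pow_succ, ← zpow_add₀ hq]
    congr 2
    push_cast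
    ring

/-- commuting family merge -/
lemma list_merge : ∀ {n : ℕ} (u v : Fin n → A),
    (∀ i j, i ≠ j → Commute (u i) (v j)) →
    (List.ofFn u).prod * (List.ofFn v).prod = (List.ofFn fun i => u i * v i).prod := by
  intro n
  induction n with
  | zero => intro u v _; simp
  | succ n ih =>
    intro u v hcross
    rw [List.ofFn_succ, List.ofFn_succ, List.ofFn_succ, List.prod_cons, List.prod_cons,
      List.prod_cons]
    have hc : Commute (v 0) (List.ofFn fun i : Fin n => u i.succ).prod := by
      refine Commute.list_prod_right _ _ fun x hx => ?_
      obtain ⟨i, rfl⟩ := List.mem_ofFn.1 hx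
      exact (hcross i.succ 0 (Fin.succ_ne_zero i)).symm
    calc u 0 * (List.ofFn fun i : Fin n => u i.succ).prod *
          (v 0 * (List.ofFn fun i : Fin n => v i.succ).prod)
        = u 0 * (((List.ofFn fun i : Fin n => u i.succ).prod * v 0) *
            (List.ofFn fun i : Fin n => v i.succ).prod) := by
          rw [mul_assoc, mul_assoc]
      _ = u 0 * v 0 * ((List.ofFn fun i : Fin n => u i.succ).prod *
            (List.ofFn fun i : Fin n => v i.succ).prod) := by
          rw [← hc.eq, mul_assoc, mul_assoc]
      _ = u 0 * v 0 * (List.ofFn fun i : Fin n => u i.succ * v i.succ).prod := by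
          rw [ih _ _ fun i j hij => hcross i.succ j.succ (by simpa using hij)]

/-- commuting family q-swap -/
lemma list_swap (hq : q ≠ 0) : ∀ {n : ℕ} (u v : Fin n → A) (E : Fin n → ℤ),
    (∀ i j, i ≠ j → Commute (u i) (v j)) →
    (∀ i, u i * v i = q ^ (E i) • (v i * u i)) →
    (List.ofFn u).prod * (List.ofFn v).prod
      = q ^ (∑ i, E i) • ((List.ofFn v).prod * (List.ofFn u).prod) := by
  intro n
  induction n with
  | zero => intro u v E _ _; simp
  | succ n ih =>
    intro u v E hcross hdiag
    rw [List.ofFn_succ (f := u), List.ofFn_succ (f := v), List.prod_cons, List.prod_cons,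
      Fin.sum_univ_succ]
    set U := (List.ofFn fun i : Fin n => u i.succ).prod with hU
    set V := (List.ofFn fun i : Fin n => v i.succ).prod with hV
    have hUv : Commute (v 0) U := by
      refine Commute.list_prod_right _ _ fun x hx => ?_
      obtain ⟨i, rfl⟩ := List.mem_ofFn.1 hx
      exact (hcross i.succ 0 (Fin.succ_ne_zero i)).symm
    have hVu : Commute (u 0) V := by
      refine Commute.list_prod_right _ _ fun x hx => ?_
      obtain ⟨i, rfl⟩ := List.mem_ofFn.1 hx
      exact hcross 0 i.succ (Fin.succ_ne_zero i).symm
    have hUV : U * V = q ^ (∑ i : Fin n, E i.succ) • (V * U) :=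
      ih _ _ _ (fun i j hij => hcross i.succ j.succ (by simpa using hij)) fun i => hdiag i.succ
    calc u 0 * U * (v 0 * V) = u 0 * ((U * v 0) * V) := by rw [mul_assoc, mul_assoc]
      _ = (u 0 * v 0) * (U * V) := by rw [← hUv.eq, mul_assoc, mul_assoc]
      _ = (q ^ E 0 • (v 0 * u 0)) * (q ^ (∑ i : Fin n, E i.succ) • (V * U)) := by
          rw [hdiag 0, hUV]
      _ = (q ^ E 0 * q ^ (∑ i : Fin n, E i.succ)) • (v 0 * (u 0 * V) * U) := by
          rw [smul_mul_assoc, mul_smul_comm, smul_smul, mul_assoc, mul_assoc, mul_assoc]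
      _ = q ^ (E 0 + ∑ i : Fin n, E i.succ) • (v 0 * V * (u 0 * U)) := by
          rw [← zpow_add₀ hq, hVu.eq, mul_assoc, mul_assoc, mul_assoc]

variable {k : ℕ} (a : Fin k → Aˣ) (b : Fin k → A)

lemma qMonomial_mul (hq : q ≠ 0)
    (hba : ∀ i, b i * (a i : A) = q • ((a i : A) * b i))
    (hcomm : ∀ i j, i ≠ j →
      Commute ((a i : A)) ((a j : A)) ∧ Commute ((a i : A)) (b j) ∧
      Commute (b i) ((a j : A)) ∧ Commute (b i) (b j))
    (m m' : (Fin k → ℤ) × (Fin k → ℕ)) :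
    ∃ ξ : ℤ, qMonomial a b m * qMonomial a b m'
      = q ^ ξ • qMonomial a b (m.1 + m'.1, m.2 + m'.2) := by
  obtain ⟨α, β⟩ := m
  obtain ⟨α', β'⟩ := m'
  refine ⟨∑ i, (β i : ℤ) * α' i, ?_⟩
  have hswap : (List.ofFn fun i => b i ^ β i).prod * (List.ofFn fun i => ((a i ^ α' i : Aˣ) : A)).prod
      = q ^ (∑ i, (β i : ℤ) * α' i) •
        ((List.ofFn fun i => ((a i ^ α' i : Aˣ) : A)).prod * (List.ofFn fun i => b i ^ β i).prod) := by
    refine list_swap hq _ _ _ (fun i j hij => ?_) (fun i => ?_)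
    · exact (((hcomm i j hij).2.2.1).units_zpow_right _).pow_left _
    · exact bpow_zpow_swap hq (hba i) (β i) (α' i)
  have hmergea : (List.ofFn fun i => ((a i ^ α i : Aˣ) : A)).prod *
        (List.ofFn fun i => ((a i ^ α' i : Aˣ) : A)).prod
      = (List.ofFn fun i => ((a i ^ (α i + α' i) : Aˣ) : A)).prod := by
    rw [list_merge _ _ fun i j hij => ((hcomm i j hij).1.units_zpow_right _).symm.units_zpow_right
      _ |>.symm]
    have hfun : (fun i => ((a i ^ α i : Aˣ) : A) * ((a i ^ α' i : Aˣ) : A))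
        = fun i => ((a i ^ (α i + α' i) : Aˣ) : A) := by
      funext i
      rw [← Units.val_mul, ← zpow_add]
    rw [hfun]
  have hmergeb : (List.ofFn fun i => b i ^ β i).prod * (List.ofFn fun i => b i ^ β' i).prod
      = (List.ofFn fun i => b i ^ (β i + β' i)).prod := by
    rw [list_merge _ _ fun i j hij => ((hcomm i j hij).2.2.2.pow_left _).pow_right _]
    have hfun : (fun i => b i ^ β i * b i ^ β' i) = fun i => b i ^ (β i + β' i) := by
      funext i
      rw [pow_add]
    rw [hfun]
  show (List.ofFn fun i => ((a i ^ α i : Aˣ) : A)).prod * (List.ofFn fun i => b i ^ β i).prod *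
      ((List.ofFn fun i => ((a i ^ α' i : Aˣ) : A)).prod * (List.ofFn fun i => b i ^ β' i).prod)
    = q ^ (∑ i, (β i : ℤ) * α' i) •
      ((List.ofFn fun i => ((a i ^ (α i + α' i) : Aˣ) : A)).prod *
        (List.ofFn fun i => b i ^ (β i + β' i)).prod)
  calc (List.ofFn fun i => ((a i ^ α i : Aˣ) : A)).prod * (List.ofFn fun i => b i ^ β i).prod *
      ((List.ofFn fun i => ((a i ^ α' i : Aˣ) : A)).prod * (List.ofFn fun i => b i ^ β' i).prod)
      = (List.ofFn fun i => ((a i ^ α i : Aˣ) : A)).prod *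
        ((List.ofFn fun i => b i ^ β i).prod * (List.ofFn fun i => ((a i ^ α' i : Aˣ) : A)).prod) *
        (List.ofFn fun i => b i ^ β' i).prod := by
        noncomm_ring
    _ = q ^ (∑ i, (β i : ℤ) * α' i) •
        ((List.ofFn fun i => ((a i ^ α i : Aˣ) : A)).prod *
          (List.ofFn fun i => ((a i ^ α' i : Aˣ) : A)).prod *
          ((List.ofFn fun i => b i ^ β i).prod * (List.ofFn fun i => b i ^ β' i).prod)) := by
        rw [hswap, mul_smul_comm, smul_mul_assoc]
        congr 1
        noncomm_ring
    _ = _ := by rw [hmergea, hmergeb]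
end Mono


/-- Positivity property: for any nonzero `q ∈ ℂ`, `T_n(Trace A₁⋯A_k)` can be written as
a sum of monomials `q^ξ ∏ᵢ aᵢ^{αᵢ} bᵢ^{βᵢ}` (ξ, αᵢ ∈ ℤ, βᵢ ∈ ℕ), each with
coefficient `+1`. -/
theorem chebT_trace_positive_sum {A : Type*} [Ring A] [Algebra ℂ A]
    (q : ℂ) (hq : q ≠ 0) {k : ℕ}
    (a : Fin k → Aˣ) (b : Fin k → A) (upper : Fin k → Bool)
    (hba : ∀ i, b i * (a i : A) = q • ((a i : A) * b i))
    (hcomm : ∀ i j, i ≠ j →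
      Commute ((a i : A)) ((a j : A)) ∧ Commute ((a i : A)) (b j) ∧
      Commute (b i) ((a j : A)) ∧ Commute (b i) (b j))
    (n : ℕ) :
    ∃ s : Multiset (ℤ × (Fin k → ℤ) × (Fin k → ℕ)),
      chebT n (Matrix.trace (List.ofFn fun i => triMat (upper i) (a i) (b i)).prod)
        = (s.map fun m => q ^ m.1 • qMonomial a b m.2).sum := by
  classical
  set P : Set A := {v | ∃ s : Multiset (ℤ × (Fin k → ℤ) × (Fin k → ℕ)),
      v = (s.map fun m => q ^ m.1 • qMonomial a b m.2).sum} with hP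
  -- closure properties of P
  have hmem0 : (0 : A) ∈ P := ⟨0, by simp⟩
  have hadd : ∀ u v : A, u ∈ P → v ∈ P → u + v ∈ P := by
    rintro u v ⟨s, rfl⟩ ⟨t, rfl⟩
    exact ⟨s + t, by rw [Multiset.map_add, Multiset.sum_add]⟩
  have hsingle : ∀ (ξ : ℤ) (m : (Fin k → ℤ) × (Fin k → ℕ)), q ^ ξ • qMonomial a b m ∈ P :=
    fun ξ m => ⟨{(ξ, m)}, by simp⟩
  have hsmul : ∀ (c : ℤ) (u : A), u ∈ P → q ^ c • u ∈ P := by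
    rintro c u ⟨s, rfl⟩
    refine ⟨s.map fun m => (c + m.1, m.2), ?_⟩
    rw [Multiset.smul_sum, Multiset.map_map, Multiset.map_map]
    congr 1
    refine Multiset.map_congr rfl fun m _ => ?_
    simp only [Function.comp_apply]
    rw [smul_smul, ← zpow_add₀ hq]
  have hmulmono : ∀ (ξ : ℤ) (m : (Fin k → ℤ) × (Fin k → ℕ)) (u : A), u ∈ P →
      (q ^ ξ • qMonomial a b m) * u ∈ P := by
    rintro ξ m u ⟨s, rfl⟩
    induction s using Multiset.induction with
    | empty => simpa using hmem0
    | cons e s ih =>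
      rw [Multiset.map_cons, Multiset.sum_cons, mul_add]
      refine hadd _ _ ?_ ih
      obtain ⟨δ, hδ⟩ := qMonomial_mul a b hq hba hcomm m e.2
      have : (q ^ ξ • qMonomial a b m) * (q ^ e.1 • qMonomial a b e.2)
          = q ^ (ξ + e.1 + δ) • qMonomial a b (m.1 + e.2.1, m.2 + e.2.2) := by
        rw [smul_mul_assoc, mul_smul_comm, hδ, smul_smul, smul_smul, ← zpow_add₀ hq,
          ← zpow_add₀ hq, add_assoc]
      rw [this]
      exact hsingle _ _
  have hmul : ∀ u v : A, u ∈ P → v ∈ P → u * v ∈ P := by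
    rintro u v ⟨s, rfl⟩ hv
    induction s using Multiset.induction with
    | empty => simpa using hmem0
    | cons e s ih =>
      rw [Multiset.map_cons, Multiset.sum_cons, add_mul]
      exact hadd _ _ (hmulmono e.1 e.2 v hv) ih
  -- basic monomials
  have h1 : (1 : A) ∈ P := by
    have hm : qMonomial a b (0, 0) = 1 := by
      rw [qMonomial]
      rw [List.prod_eq_one fun x hx => by
          obtain ⟨j, rfl⟩ := List.mem_ofFn.1 hx; simp,
        List.prod_eq_one fun x hx => by
          obtain ⟨j, rfl⟩ := List.mem_ofFn.1 hx; simp, one_mul]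
    have := hsingle 0 (0, 0)
    rwa [hm, zpow_zero, one_smul] at this
  have hbprod : ∀ (β : Fin k → ℕ), (List.ofFn fun i => b i ^ (0:ℕ)).prod = 1 := by
    intro β
    exact List.prod_eq_one fun x hx => by
      obtain ⟨j, rfl⟩ := List.mem_ofFn.1 hx; simp
  have hA : ∀ i, ((a i : A)) ∈ P := by
    intro i
    have hm : qMonomial a b (fun j => if j = i then 1 else 0, 0) = (a i : A) := by
      rw [qMonomial]
      have h2 : (List.ofFn fun j => ((a j ^ (if j = i then (1:ℤ) else 0) : Aˣ) : A)).prod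
          = (a i : A) := by
        rw [ofFn_prod_single _ i fun j hj => by simp [if_neg hj], if_pos rfl, zpow_one]
      rw [h2]
      rw [List.prod_eq_one fun x hx => by
        obtain ⟨j, rfl⟩ := List.mem_ofFn.1 hx; simp, mul_one]
    have := hsingle 0 (fun j => if j = i then 1 else 0, 0)
    rwa [hm, zpow_zero, one_smul] at this
  have hAinv : ∀ i, (((a i)⁻¹ : Aˣ) : A) ∈ P := by
    intro i
    have hm : qMonomial a b (fun j => if j = i then -1 else 0, 0) = (((a i)⁻¹ : Aˣ) : A) := by
      rw [qMonomial]
      have h2 : (List.ofFn fun j => ((a j ^ (if j = i then (-1:ℤ) else 0) : Aˣ) : A)).prod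
          = (((a i)⁻¹ : Aˣ) : A) := by
        rw [ofFn_prod_single _ i fun j hj => by simp [if_neg hj], if_pos rfl, zpow_neg_one]
      rw [h2]
      rw [List.prod_eq_one fun x hx => by
        obtain ⟨j, rfl⟩ := List.mem_ofFn.1 hx; simp, mul_one]
    have := hsingle 0 (fun j => if j = i then -1 else 0, 0)
    rwa [hm, zpow_zero, one_smul] at this
  have hB : ∀ i, b i ∈ P := by
    intro i
    have hm : qMonomial a b (0, fun j => if j = i then 1 else 0) = b i := by
      rw [qMonomial]
      have h2 : (List.ofFn fun j => b j ^ (if j = i then (1:ℕ) else 0)).prod = b i := by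
        rw [ofFn_prod_single _ i fun j hj => by simp [if_neg hj], if_pos rfl, pow_one]
      have h3 : (List.ofFn fun j => ((a j ^ ((0 : Fin k → ℤ) j) : Aˣ) : A)).prod = 1 :=
        List.prod_eq_one fun x hx => by
          obtain ⟨j, rfl⟩ := List.mem_ofFn.1 hx; simp
      rw [h2, h3, one_mul]
    have := hsingle 0 (0, fun j => if j = i then 1 else 0)
    rwa [hm, zpow_zero, one_smul] at this
  -- main induction over the list of factors
  have main : ∀ l : List (Fin k), l.Pairwise (· ≠ ·) →
      (QRel q (((l.map fun i => triMat (upper i) (a i) (b i)).prod) 0 0)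
        (((l.map fun i => triMat (upper i) (a i) (b i)).prod) 0 1)
        (((l.map fun i => triMat (upper i) (a i) (b i)).prod) 1 0)
        (((l.map fun i => triMat (upper i) (a i) (b i)).prod) 1 1)) ∧
      (∀ p r : Fin 2, ((l.map fun i => triMat (upper i) (a i) (b i)).prod) p r ∈ P) ∧
      (∀ j : Fin k, j ∉ l → ∀ p r : Fin 2,
        Commute ((a j : A)) (((l.map fun i => triMat (upper i) (a i) (b i)).prod) p r) ∧
        Commute (b j) (((l.map fun i => triMat (upper i) (a i) (b i)).prod) p r)) := by
    intro l
    induction l with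
    | nil =>
      intro _
      simp only [List.map_nil, List.prod_nil]
      refine ⟨?_, ?_, ?_⟩
      · constructor <;> simp [Matrix.one_apply]
      · intro p r
        fin_cases p <;> fin_cases r <;> simp [Matrix.one_apply]
        exacts [h1, hmem0, hmem0, h1]
      · intro j _ p r
        fin_cases p <;> fin_cases r <;> simp [Matrix.one_apply] <;>
          exact ⟨Commute.one_right _, Commute.one_right _⟩
    | cons i l ih =>
      intro hp
      obtain ⟨hil, hpl⟩ := List.pairwise_cons.mp hp
      obtain ⟨ihQ, ihP, ihC⟩ := ih hpl
      have hinotin : i ∉ l := fun hmem => (hil i hmem) rfl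
      set M : Matrix (Fin 2) (Fin 2) A := (l.map fun i => triMat (upper i) (a i) (b i)).prod
        with hM
      have hprod : ((i :: l).map fun i => triMat (upper i) (a i) (b i)).prod
          = triMat (upper i) (a i) (b i) * M := by
        rw [List.map_cons, List.prod_cons]
      have cM := ihC i hinotin
      cases hup : upper i with
      | true =>
        have e00 : (triMat true (a i) (b i) * M) 0 0 = ↑(a i) * M 0 0 + b i * M 1 0 := by
          simp [triMat, Matrix.mul_apply, Fin.sum_univ_two]
        have e01 : (triMat true (a i) (b i) * M) 0 1 = ↑(a i) * M 0 1 + b i * M 1 1 := by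
          simp [triMat, Matrix.mul_apply, Fin.sum_univ_two]
        have e10 : (triMat true (a i) (b i) * M) 1 0 = ↑(a i)⁻¹ * M 1 0 := by
          simp [triMat, Matrix.mul_apply, Fin.sum_univ_two]
        have e11 : (triMat true (a i) (b i) * M) 1 1 = ↑(a i)⁻¹ * M 1 1 := by
          simp [triMat, Matrix.mul_apply, Fin.sum_univ_two]
        refine ⟨?_, ?_, ?_⟩
        · rw [hprod, hup, e00, e01, e10, e11]
          exact upper_mul hq (hba i) (cM 0 0).1 (cM 0 1).1 (cM 1 0).1 (cM 1 1).1
            (cM 0 0).2 (cM 0 1).2 (cM 1 0).2 (cM 1 1).2 ihQ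
        · have m00 : (triMat true (a i) (b i) * M) 0 0 ∈ P := by
            rw [e00]
            exact hadd _ _ (hmul _ _ (hA i) (ihP 0 0)) (hmul _ _ (hB i) (ihP 1 0))
          have m01 : (triMat true (a i) (b i) * M) 0 1 ∈ P := by
            rw [e01]
            exact hadd _ _ (hmul _ _ (hA i) (ihP 0 1)) (hmul _ _ (hB i) (ihP 1 1))
          have m10 : (triMat true (a i) (b i) * M) 1 0 ∈ P := by
            rw [e10]; exact hmul _ _ (hAinv i) (ihP 1 0)
          have m11 : (triMat true (a i) (b i) * M) 1 1 ∈ P := by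
            rw [e11]; exact hmul _ _ (hAinv i) (ihP 1 1)
          intro p r
          rw [hprod, hup]
          fin_cases p <;> fin_cases r
          exacts [m00, m01, m10, m11]
        · intro j hj p r
          have hji : j ≠ i := fun h => hj (h ▸ List.mem_cons_self)
          have hjl : j ∉ l := fun h => hj (List.mem_cons_of_mem _ h)
          have cja : Commute ((a j : A)) ((a i : A)) := (hcomm j i hji).1
          have cjb : Commute ((a j : A)) (b i) := (hcomm j i hji).2.1
          have cba : Commute (b j) ((a i : A)) := (hcomm j i hji).2.2.1
          have cbb : Commute (b j) (b i) := (hcomm j i hji).2.2.2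
          have cM' := ihC j hjl
          have c00 : Commute ((a j : A)) ((triMat true (a i) (b i) * M) 0 0) ∧
              Commute (b j) ((triMat true (a i) (b i) * M) 0 0) := by
            rw [e00]
            exact ⟨(cja.mul_right (cM' 0 0).1).add_right (cjb.mul_right (cM' 1 0).1),
              (cba.mul_right (cM' 0 0).2).add_right (cbb.mul_right (cM' 1 0).2)⟩
          have c01 : Commute ((a j : A)) ((triMat true (a i) (b i) * M) 0 1) ∧
              Commute (b j) ((triMat true (a i) (b i) * M) 0 1) := by
            rw [e01]
            exact ⟨(cja.mul_right (cM' 0 1).1).add_right (cjb.mul_right (cM' 1 1).1),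
              (cba.mul_right (cM' 0 1).2).add_right (cbb.mul_right (cM' 1 1).2)⟩
          have c10 : Commute ((a j : A)) ((triMat true (a i) (b i) * M) 1 0) ∧
              Commute (b j) ((triMat true (a i) (b i) * M) 1 0) := by
            rw [e10]
            exact ⟨cja.units_inv_right.mul_right (cM' 1 0).1,
              cba.units_inv_right.mul_right (cM' 1 0).2⟩
          have c11 : Commute ((a j : A)) ((triMat true (a i) (b i) * M) 1 1) ∧
              Commute (b j) ((triMat true (a i) (b i) * M) 1 1) := by
            rw [e11]
            exact ⟨cja.units_inv_right.mul_right (cM' 1 1).1,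
              cba.units_inv_right.mul_right (cM' 1 1).2⟩
          rw [hprod, hup]
          fin_cases p <;> fin_cases r
          exacts [c00, c01, c10, c11]
      | false =>
        have e00 : (triMat false (a i) (b i) * M) 0 0 = ↑(a i) * M 0 0 := by
          simp [triMat, Matrix.mul_apply, Fin.sum_univ_two]
        have e01 : (triMat false (a i) (b i) * M) 0 1 = ↑(a i) * M 0 1 := by
          simp [triMat, Matrix.mul_apply, Fin.sum_univ_two]
        have e10 : (triMat false (a i) (b i) * M) 1 0 = b i * M 0 0 + ↑(a i)⁻¹ * M 1 0 := by
          simp [triMat, Matrix.mul_apply, Fin.sum_univ_two]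
        have e11 : (triMat false (a i) (b i) * M) 1 1 = b i * M 0 1 + ↑(a i)⁻¹ * M 1 1 := by
          simp [triMat, Matrix.mul_apply, Fin.sum_univ_two]
        refine ⟨?_, ?_, ?_⟩
        · rw [hprod, hup, e00, e01, e10, e11]
          exact lower_mul hq (hba i) (cM 0 0).1 (cM 0 1).1 (cM 1 0).1 (cM 1 1).1
            (cM 0 0).2 (cM 0 1).2 (cM 1 0).2 (cM 1 1).2 ihQ
        · have m00 : (triMat false (a i) (b i) * M) 0 0 ∈ P := by
            rw [e00]; exact hmul _ _ (hA i) (ihP 0 0)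
          have m01 : (triMat false (a i) (b i) * M) 0 1 ∈ P := by
            rw [e01]; exact hmul _ _ (hA i) (ihP 0 1)
          have m10 : (triMat false (a i) (b i) * M) 1 0 ∈ P := by
            rw [e10]
            exact hadd _ _ (hmul _ _ (hB i) (ihP 0 0)) (hmul _ _ (hAinv i) (ihP 1 0))
          have m11 : (triMat false (a i) (b i) * M) 1 1 ∈ P := by
            rw [e11]
            exact hadd _ _ (hmul _ _ (hB i) (ihP 0 1)) (hmul _ _ (hAinv i) (ihP 1 1))
          intro p r
          rw [hprod, hup]
          fin_cases p <;> fin_cases r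
          exacts [m00, m01, m10, m11]
        · intro j hj p r
          have hji : j ≠ i := fun h => hj (h ▸ List.mem_cons_self)
          have hjl : j ∉ l := fun h => hj (List.mem_cons_of_mem _ h)
          have cja : Commute ((a j : A)) ((a i : A)) := (hcomm j i hji).1
          have cjb : Commute ((a j : A)) (b i) := (hcomm j i hji).2.1
          have cba : Commute (b j) ((a i : A)) := (hcomm j i hji).2.2.1
          have cbb : Commute (b j) (b i) := (hcomm j i hji).2.2.2
          have cM' := ihC j hjl
          have c00 : Commute ((a j : A)) ((triMat false (a i) (b i) * M) 0 0) ∧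
              Commute (b j) ((triMat false (a i) (b i) * M) 0 0) := by
            rw [e00]
            exact ⟨cja.mul_right (cM' 0 0).1, cba.mul_right (cM' 0 0).2⟩
          have c01 : Commute ((a j : A)) ((triMat false (a i) (b i) * M) 0 1) ∧
              Commute (b j) ((triMat false (a i) (b i) * M) 0 1) := by
            rw [e01]
            exact ⟨cja.mul_right (cM' 0 1).1, cba.mul_right (cM' 0 1).2⟩
          have c10 : Commute ((a j : A)) ((triMat false (a i) (b i) * M) 1 0) ∧
              Commute (b j) ((triMat false (a i) (b i) * M) 1 0) := by
            rw [e10]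
            exact ⟨(cjb.mul_right (cM' 0 0).1).add_right
                (cja.units_inv_right.mul_right (cM' 1 0).1),
              (cbb.mul_right (cM' 0 0).2).add_right
                (cba.units_inv_right.mul_right (cM' 1 0).2)⟩
          have c11 : Commute ((a j : A)) ((triMat false (a i) (b i) * M) 1 1) ∧
              Commute (b j) ((triMat false (a i) (b i) * M) 1 1) := by
            rw [e11]
            exact ⟨(cjb.mul_right (cM' 0 1).1).add_right
                (cja.units_inv_right.mul_right (cM' 1 1).1),
              (cbb.mul_right (cM' 0 1).2).add_right
                (cba.units_inv_right.mul_right (cM' 1 1).2)⟩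
          rw [hprod, hup]
          fin_cases p <;> fin_cases r
          exacts [c00, c01, c10, c11]
  obtain ⟨hQrel, hPmem, -⟩ := main (List.finRange k) (List.nodup_finRange k)
  rw [List.ofFn_eq_map, Matrix.trace_fin_two]
  have hQsm : ∀ u : A, u ∈ P → q⁻¹ • u ∈ P := by
    intro u hu
    have := hsmul (-1) u hu
    rwa [zpow_neg_one] at this
  have hqsm : ∀ u : A, u ∈ P → q • u ∈ P := by
    intro u hu
    have := hsmul 1 u hu
    rwa [zpow_one] at this
  exact chebT_mem P q⁻¹ q h1 hadd hmul hQsm hqsm _ _ _ _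
    (hPmem 0 0) (hPmem 0 1) (hPmem 1 0) (hPmem 1 1) hQrel.r6 hQrel.r7 n
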